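/- For the Gaussian trade-off function f_μ(α) = Φ(Φ^{-1}(1 - α) - μ) with μ > 0, where Φ is the standard normal CDF, one has f_μ(α) < 1 for all α ∈ (0,1], lim_{α→0⁺} f_μ(α) = 1, and lim_{α→0⁺} (1 - f_μ(α))/α = ∞. Hence the Gaussian mechanism fails gracefully but has unbounded relative disclosure risk. -/

import Mathlib

open Set Filter Real

/-- The standard normal cumulative distribution function. -/
noncomputable def stdNormalCDF (t : ℝ) : ℝ :=
  ∫ x in Set.Iic t, (Real.sqrt (2 * Real.pi))⁻¹ * Real.exp (-(x ^ 2) / 2)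

open MeasureTheory in
noncomputable def gpdf (x : ℝ) : ℝ := (Real.sqrt (2 * Real.pi))⁻¹ * Real.exp (-(x ^ 2) / 2)

open MeasureTheory

lemma gpdf_pos (x : ℝ) : 0 < gpdf x := by
  apply mul_pos (inv_pos.2 (Real.sqrt_pos.2 (by positivity))) (Real.exp_pos _)

lemma gpdf_integrable : Integrable gpdf := by
  have h := (integrable_exp_neg_mul_sq (show (0:ℝ) < 1/2 by norm_num)).const_mul
    (Real.sqrt (2 * Real.pi))⁻¹
  convert h using 2 with x
  unfold gpdf
  ring_nf

lemma gpdf_total : ∫ x, gpdf x = 1 := by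
  unfold gpdf
  rw [MeasureTheory.integral_const_mul]
  have h := integral_gaussian (1/2 : ℝ)
  have h2 : ∀ x : ℝ, -(x^2)/2 = -(1/2) * x^2 := fun x => by ring
  simp_rw [h2, h]
  rw [show Real.pi / (1/2) = 2 * Real.pi by ring]
  rw [inv_mul_cancel₀ (by positivity)]

lemma cdf_eq (t : ℝ) : stdNormalCDF t = ∫ x in Iic t, gpdf x := rfl

lemma cdf_add_tail (t : ℝ) : stdNormalCDF t + ∫ x in Ioi t, gpdf x = 1 := by
  rw [cdf_eq, intervalIntegral.integral_Iic_add_Ioi gpdf_integrable.integrableOn gpdf_integrable.integrableOn,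
    gpdf_total]

lemma tail_pos (t : ℝ) : 0 < ∫ x in Ioi t, gpdf x := by
  have h1 : (0:ℝ) < ∫ x in Ioc t (t+1), gpdf x := by
    apply (setIntegral_pos_iff_support_of_nonneg_ae ?_ ?_).2
    · have : Function.support gpdf = univ := by
        ext x; simp [Function.support, (gpdf_pos x).ne']
      rw [this, univ_inter, Real.volume_Ioc]
      simp [ENNReal.ofReal_pos]
    · filter_upwards with x using (gpdf_pos x).le
    · exact gpdf_integrable.integrableOn
  calc (0:ℝ) < ∫ x in Ioc t (t+1), gpdf x := h1
    _ ≤ ∫ x in Ioi t, gpdf x := by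
        apply setIntegral_mono_set gpdf_integrable.integrableOn
        · filter_upwards with x using (gpdf_pos x).le
        · exact HasSubset.Subset.eventuallyLE Ioc_subset_Ioi_self

lemma cdf_lt_one (t : ℝ) : stdNormalCDF t < 1 := by
  have := cdf_add_tail t
  linarith [tail_pos t]

lemma cdf_mono : Monotone stdNormalCDF := by
  intro s t hst
  rw [cdf_eq, cdf_eq]
  apply setIntegral_mono_set gpdf_integrable.integrableOn
  · filter_upwards with x using (gpdf_pos x).le
  · exact HasSubset.Subset.eventuallyLE (Iic_subset_Iic.2 hst)

lemma cdf_tendsto_one : Tendsto stdNormalCDF atTop (nhds 1) := by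
  have h := tendsto_setIntegral_of_monotone (f := gpdf) (μ := volume)
    (s := fun t : ℝ => Iic t) (fun t => measurableSet_Iic)
    (fun a b hab => Iic_subset_Iic.2 hab) ?_
  · have hu : (⋃ t : ℝ, Iic t) = univ := by
      ext x; simpa using ⟨x, le_refl x⟩
    rw [hu, setIntegral_univ, gpdf_total] at h
    exact h
  · rw [show (⋃ t : ℝ, Iic t) = univ by ext x; simpa using ⟨x, le_refl x⟩]
    exact gpdf_integrable.integrableOn

lemma exp_tail_int {t : ℝ} (ht : 0 < t) :
    ∫ x in Ioi t, Real.exp (-(t * (x - t))) = 1 / t := by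
  have h1 : ∀ x : ℝ, Real.exp (-(t * (x - t))) = Real.exp (t^2) * Real.exp (-(x * t)) := by
    intro x; rw [← Real.exp_add]; ring_nf
  simp_rw [h1]
  rw [MeasureTheory.integral_const_mul]
  have h2 := integral_comp_mul_right_Ioi (fun y => Real.exp (-y)) t ht
  simp only [smul_eq_mul] at h2
  rw [h2, integral_exp_neg_Ioi, ← mul_assoc, mul_comm (Real.exp (t^2)) t⁻¹, mul_assoc,
    ← Real.exp_add, show t^2 + -(t*t) = 0 by ring, Real.exp_zero, mul_one, one_div]

-- tail upper bound: ∫_{Ioi t} gpdf ≤ gpdf t / t for t > 0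
lemma tail_le {t : ℝ} (ht : 0 < t) : (∫ x in Ioi t, gpdf x) ≤ gpdf t / t := by
  have hbound : ∀ x ∈ Ioi t, gpdf x ≤ gpdf t * Real.exp (-(t * (x - t))) := by
    intro x hx
    unfold gpdf
    rw [mul_assoc, ← Real.exp_add]
    apply mul_le_mul_of_nonneg_left _ (by positivity)
    apply Real.exp_le_exp.2
    nlinarith [sq_nonneg (x - t)]
  have hint2 : IntegrableOn (fun x => gpdf t * Real.exp (-(t * (x - t)))) (Ioi t) := by
    have : ∀ x : ℝ, gpdf t * Real.exp (-(t * (x - t))) =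
        (gpdf t * Real.exp (t^2)) * Real.exp (-t * x) := by
      intro x; rw [mul_assoc, ← Real.exp_add]; ring_nf
    simp_rw [this]
    exact (exp_neg_integrableOn_Ioi t ht).const_mul _
  calc (∫ x in Ioi t, gpdf x) ≤ ∫ x in Ioi t, gpdf t * Real.exp (-(t * (x - t))) := by
        apply setIntegral_mono_on gpdf_integrable.integrableOn hint2 measurableSet_Ioi hbound
    _ = gpdf t * (1 / t) := by rw [MeasureTheory.integral_const_mul, exp_tail_int ht]
    _ = gpdf t / t := by ring

-- numerator lower bound: μ * gpdf t ≤ ∫_{Ioi (t-μ)} gpdf, for 0 < μ ≤ t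
lemma num_ge {μ t : ℝ} (hμ : 0 < μ) (ht : μ ≤ t) :
    μ * gpdf t ≤ ∫ x in Ioi (t - μ), gpdf x := by
  have h1 : μ * gpdf t ≤ ∫ x in Ioc (t - μ) t, gpdf x := by
    have := setIntegral_ge_of_const_le (μ := volume) (s := Ioc (t - μ) t) (c := gpdf t)
      measurableSet_Ioc (by simp [Real.volume_Ioc]) ?_ gpdf_integrable.integrableOn
    · rw [measureReal_def, Real.volume_Ioc, show t - (t - μ) = μ by ring,
        ENNReal.toReal_ofReal hμ.le, smul_eq_mul] at this
      linarith [this]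
    · intro x hx
      unfold gpdf
      apply mul_le_mul_of_nonneg_left _ (by positivity)
      apply Real.exp_le_exp.2
      have hx0 : 0 ≤ x := le_trans (by linarith) hx.1.le
      have hxt : x ≤ t := hx.2
      nlinarith
  refine h1.trans (setIntegral_mono_set gpdf_integrable.integrableOn ?_ ?_)
  · filter_upwards with x using (gpdf_pos x).le
  · exact HasSubset.Subset.eventuallyLE Ioc_subset_Ioi_self

lemma one_sub_cdf (t : ℝ) : 1 - stdNormalCDF t = ∫ x in Ioi t, gpdf x := by
  linarith [cdf_add_tail t]

lemma ratio_tendsto {μ : ℝ} (hμ : 0 < μ) :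
    Tendsto (fun t => (1 - stdNormalCDF (t - μ)) / (1 - stdNormalCDF t)) atTop atTop := by
  apply tendsto_atTop_mono' atTop
    (show ∀ᶠ t in atTop, μ * t ≤ (1 - stdNormalCDF (t - μ)) / (1 - stdNormalCDF t) from ?_)
    (Tendsto.const_mul_atTop hμ tendsto_id)
  filter_upwards [eventually_ge_atTop (max μ 1)] with t ht
  have htμ : μ ≤ t := le_trans (le_max_left _ _) ht
  have ht1 : (1:ℝ) ≤ t := le_trans (le_max_right _ _) ht
  have ht0 : (0:ℝ) < t := by linarith
  rw [one_sub_cdf, one_sub_cdf]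
  have hD : 0 < ∫ x in Ioi t, gpdf x := tail_pos t
  have hDle : (∫ x in Ioi t, gpdf x) ≤ gpdf t / t := tail_le ht0
  have hN : μ * gpdf t ≤ ∫ x in Ioi (t - μ), gpdf x := num_ge hμ htμ
  have key : (μ * gpdf t) / (gpdf t / t) ≤
      (∫ x in Ioi (t - μ), gpdf x) / (∫ x in Ioi t, gpdf x) :=
    div_le_div₀ (le_trans (mul_nonneg hμ.le (gpdf_pos t).le) hN) hN hD hDle
  have heq : (μ * gpdf t) / (gpdf t / t) = μ * t := by
    field_simp [(gpdf_pos t).ne']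
  linarith [key, heq ▸ key]

lemma inv_tendsto {Φinv : ℝ → ℝ}
    (hΦinv : ∀ x ∈ Ioo (0:ℝ) 1, stdNormalCDF (Φinv x) = x) :
    Tendsto (fun α => Φinv (1 - α)) (nhdsWithin 0 (Ioi 0)) atTop := by
  rw [tendsto_atTop]
  intro M
  have hM : 0 < 1 - stdNormalCDF M := by linarith [cdf_lt_one M]
  have hmem : Ioo (0:ℝ) (min 1 (1 - stdNormalCDF M)) ∈ nhdsWithin 0 (Ioi 0) :=
    Ioo_mem_nhdsGT_of_mem ⟨le_refl _, lt_min one_pos hM⟩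
  filter_upwards [hmem] with α hα
  have hα1 : α < 1 := lt_of_lt_of_le hα.2 (min_le_left _ _)
  have hαM : α < 1 - stdNormalCDF M := lt_of_lt_of_le hα.2 (min_le_right _ _)
  have h1α : (1 - α) ∈ Ioo (0:ℝ) 1 := ⟨by linarith, by linarith [hα.1]⟩
  have := hΦinv _ h1α
  by_contra h
  push_neg at h
  have := cdf_mono h.le
  rw [hΦinv _ h1α] at this
  linarith

/-- the Gaussian trade-off function f_μ(α) = Φ(Φ⁻¹(1-α) - μ) satisfies
f_μ(α) < 1 on (0,1], tends to 1 as α → 0⁺, and its relative disclosure risk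
(1 - f_μ(α))/α tends to ∞ as α → 0⁺ (graceful failure, unbounded relative risk). -/
theorem gaussian_graceful_failure_unbounded_risk
    (μ : ℝ) (hμ : 0 < μ)
    (Φinv : ℝ → ℝ)
    (hΦinv : ∀ x ∈ Ioo (0:ℝ) 1, stdNormalCDF (Φinv x) = x)
    (hΦinv' : ∀ t : ℝ, Φinv (stdNormalCDF t) = t) :
    (∀ α ∈ Ioc (0:ℝ) 1, stdNormalCDF (Φinv (1 - α) - μ) < 1) ∧
    Tendsto (fun α => stdNormalCDF (Φinv (1 - α) - μ)) (nhdsWithin 0 (Ioi 0)) (nhds 1) ∧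
    Tendsto (fun α => (1 - stdNormalCDF (Φinv (1 - α) - μ)) / α)
      (nhdsWithin 0 (Ioi 0)) atTop := by
  have hinv := inv_tendsto hΦinv
  refine ⟨fun α _ => cdf_lt_one _, ?_, ?_⟩
  · exact cdf_tendsto_one.comp (tendsto_atTop_add_const_right _ (-μ) hinv)
  · have hcomp : Tendsto
        (fun α => (1 - stdNormalCDF (Φinv (1 - α) - μ)) / (1 - stdNormalCDF (Φinv (1 - α))))
        (nhdsWithin 0 (Ioi 0)) atTop := (ratio_tendsto hμ).comp hinv
    apply hcomp.congr'
    have hmem : Ioo (0:ℝ) 1 ∈ nhdsWithin 0 (Ioi 0) :=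
      Ioo_mem_nhdsGT_of_mem ⟨le_refl _, one_pos⟩
    filter_upwards [hmem] with α hα
    have h1α : (1 - α) ∈ Ioo (0:ℝ) 1 := ⟨by linarith [hα.2], by linarith [hα.1]⟩
    rw [hΦinv _ h1α]
    ring_nf
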